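/- If B is an infinite-dimensional linear subspace of the space of bounded continuous functions ℝ → ℝ, then h_top^+(B) = ∞, i.e. for every real number M there exists f ∈ B with topological entropy h_top(f) > M. -/

import Mathlib

open BoundedContinuousFunction

/-- The topological entropy of `f : ℝ → ℝ`, defined as the (Bowen/cover) topological
entropy of `f` on the closure of its image. -/
noncomputable def htop (f : ℝ → ℝ) : EReal :=
  Dynamics.coverEntropy f (closure (Set.range f))

/-- `f` has a `d`-horseshoe: there are `d` nondegenerate compact intervals with pairwise
disjoint interiors, each of whose images under `f` contains all of them. -/
def HasHorseshoe (f : ℝ → ℝ) (d : ℕ) : Prop :=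
  ∃ I : Fin d → ℝ × ℝ,
    (∀ i, (I i).1 < (I i).2) ∧
    (∀ i j, i ≠ j →
      Disjoint (interior (Set.Icc (I i).1 (I i).2)) (interior (Set.Icc (I j).1 (I j).2))) ∧
    (∀ i j, Set.Icc (I j).1 (I j).2 ⊆ f '' Set.Icc (I i).1 (I i).2)

section aux


open BoundedContinuousFunction

/-- Evaluation at a point, as a linear functional on a submodule of `ℝ →ᵇ ℝ`. -/
noncomputable def evalB (B : Submodule ℝ (ℝ →ᵇ ℝ)) (x : ℝ) : B →ₗ[ℝ] ℝ where
  toFun f := (f : ℝ →ᵇ ℝ) x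
  map_add' f g := by simp
  map_smul' c f := by simp

lemma exists_eval_surj (B : Submodule ℝ (ℝ →ᵇ ℝ)) (hB : ¬ Module.Finite ℝ B) (n : ℕ) :
    ∃ x : Fin n → ℝ, Function.Injective x ∧
      ∀ v : Fin n → ℝ, ∃ f ∈ B, ∀ i, (f : ℝ →ᵇ ℝ) (x i) = v i := by
  induction n with
  | zero =>
    refine ⟨fun _ => 0, fun i => i.elim0, fun v => ⟨0, B.zero_mem, fun i => i.elim0⟩⟩
  | succ n ih =>
    obtain ⟨x, hx, hsurj⟩ := ih
    -- find y and f ∈ B vanishing on all x i but not at y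
    have key : ∃ y : ℝ, ∃ f ∈ B, (∀ i, (f : ℝ →ᵇ ℝ) (x i) = 0) ∧ (f : ℝ →ᵇ ℝ) y ≠ 0 := by
      by_contra h
      push_neg at h
      have hker : LinearMap.ker (LinearMap.pi (fun i : Fin n => evalB B (x i))) = ⊥ := by
        rw [LinearMap.ker_eq_bot']
        intro f hf
        have h0 : ∀ i, ((f : ℝ →ᵇ ℝ) : ℝ → ℝ) (x i) = 0 := by
          intro i
          have := congrFun hf i
          simpa [LinearMap.pi_apply, evalB] using this
        have : ∀ y, ((f : ℝ →ᵇ ℝ) : ℝ → ℝ) y = 0 := fun y => h y f f.2 h0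
        ext1
        ext y
        simpa using this y
      exact hB (Module.Finite.of_injective (LinearMap.pi (fun i : Fin n => evalB B (x i)))
        ((injective_iff_map_eq_zero _).mpr (fun a ha => LinearMap.ker_eq_bot'.mp hker a ha)))
    obtain ⟨y, f, hfB, hf0, hfy⟩ := key
    have hyx : ∀ i, y ≠ x i := by
      intro i hyi
      exact hfy (hyi ▸ hf0 i)
    refine ⟨Fin.snoc x y, ?_, ?_⟩
    · intro i j hij
      induction i using Fin.lastCases with
      | last =>
        induction j using Fin.lastCases with
        | last => rfl
        | cast j =>
          rw [Fin.snoc_last, Fin.snoc_castSucc] at hij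
          exact absurd hij (hyx j)
      | cast i =>
        induction j using Fin.lastCases with
        | last =>
          rw [Fin.snoc_last, Fin.snoc_castSucc] at hij
          exact absurd hij.symm (hyx i)
        | cast j =>
          rw [Fin.snoc_castSucc, Fin.snoc_castSucc] at hij
          exact congrArg Fin.castSucc (hx hij)
    · intro v
      obtain ⟨g, hgB, hg⟩ := hsurj (fun i => v i.castSucc)
      refine ⟨g + ((v (Fin.last n) - (g : ℝ →ᵇ ℝ) y) / (f : ℝ →ᵇ ℝ) y) • f, ?_, ?_⟩
      · exact B.add_mem hgB (B.smul_mem _ hfB)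
      · intro i
        induction i using Fin.lastCases with
        | last =>
          simp only [Fin.snoc_last, coe_add, coe_smul, Pi.add_apply, Pi.smul_apply,
            smul_eq_mul]
          field_simp
          ring
        | cast i =>
          simp only [Fin.snoc_castSucc, coe_add, coe_smul, Pi.add_apply, Pi.smul_apply,
            smul_eq_mul, hf0 i, mul_zero, add_zero]
          exact hg i

lemma exists_eval_surj_mono (B : Submodule ℝ (ℝ →ᵇ ℝ)) (hB : ¬ Module.Finite ℝ B) (n : ℕ) :
    ∃ x : Fin n → ℝ, StrictMono x ∧
      ∀ v : Fin n → ℝ, ∃ f ∈ B, ∀ i, (f : ℝ →ᵇ ℝ) (x i) = v i := by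
  obtain ⟨x, hinj, hsurj⟩ := exists_eval_surj B hB n
  refine ⟨x ∘ Tuple.sort x, (Tuple.monotone_sort x).strictMono_of_injective
    (hinj.comp (Tuple.sort x).injective), fun v => ?_⟩
  obtain ⟨f, hfB, hf⟩ := hsurj (fun j => v ((Tuple.sort x).symm j))
  exact ⟨f, hfB, fun i => by simpa using hf ((Tuple.sort x) i)⟩


open Set

lemma core_Icc_image_eq {g : ℝ → ℝ} (hg : Continuous g) {u v p q : ℝ} (huv : u ≤ v)
    (hp : g u = p) (hq : g v = q) (hpq : p ≤ q) :
    ∃ r' s', u ≤ r' ∧ r' ≤ s' ∧ s' ≤ v ∧ g '' Set.Icc r' s' = Set.Icc p q := by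
  set A : Set ℝ := Icc u v ∩ g ⁻¹' {q} with hA
  have hA_closed : IsClosed A := isClosed_Icc.inter (isClosed_singleton.preimage hg)
  have hA_ne : A.Nonempty := ⟨v, ⟨⟨huv, le_rfl⟩, hq⟩⟩
  have hA_bdd : BddBelow A := ⟨u, fun t ht => ht.1.1⟩
  set s' := sInf A with hs'
  have hs'A : s' ∈ A := hA_closed.csInf_mem hA_ne hA_bdd
  have hs'_min : ∀ t ∈ A, s' ≤ t := fun t ht => csInf_le hA_bdd ht
  set B : Set ℝ := Icc u s' ∩ g ⁻¹' {p} with hB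
  have hB_closed : IsClosed B := isClosed_Icc.inter (isClosed_singleton.preimage hg)
  have hB_ne : B.Nonempty := ⟨u, ⟨⟨le_rfl, hs'A.1.1⟩, hp⟩⟩
  have hB_bdd : BddAbove B := ⟨s', fun t ht => ht.1.2⟩
  set r' := sSup B with hr'
  have hr'B : r' ∈ B := hB_closed.csSup_mem hB_ne hB_bdd
  have hr'_max : ∀ t ∈ B, t ≤ r' := fun t ht => le_csSup hB_bdd ht
  have hur' : u ≤ r' := hr'B.1.1
  have hr's' : r' ≤ s' := hr'B.1.2
  have hs'v : s' ≤ v := hs'A.1.2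
  have hgr' : g r' = p := hr'B.2
  have hgs' : g s' = q := hs'A.2
  refine ⟨r', s', hur', hr's', hs'v, Subset.antisymm ?_ ?_⟩
  · rintro z ⟨t, ht, rfl⟩
    constructor
    · by_contra hlt
      push_neg at hlt
      obtain ⟨t'', ht'', hgt''⟩ := intermediate_value_Icc ht.2 hg.continuousOn
        (show p ∈ Icc (g t) (g s') from ⟨hlt.le, by rw [hgs']; exact hpq⟩)
      have htB : t'' ∈ B := ⟨⟨le_trans hur' (le_trans ht.1 ht''.1), ht''.2⟩, hgt''⟩
      have : t = r' := le_antisymm (by linarith [hr'_max t'' htB, ht''.1]) ht.1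
      rw [this, hgr'] at hlt
      exact lt_irrefl p hlt
    · by_contra hlt
      push_neg at hlt
      obtain ⟨t', ht', hgt'⟩ := intermediate_value_Icc ht.1 hg.continuousOn
        (show q ∈ Icc (g r') (g t) from ⟨by rw [hgr']; exact hpq, hlt.le⟩)
      have htA : t' ∈ A := ⟨⟨le_trans hur' ht'.1, le_trans ht'.2 (le_trans ht.2 hs'v)⟩, hgt'⟩
      have : t = s' := le_antisymm ht.2 (by linarith [hs'_min t' htA, ht'.2])
      rw [this, hgs'] at hlt
      exact lt_irrefl q hlt
  · have := intermediate_value_Icc hr's' hg.continuousOn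
    rwa [hgr', hgs'] at this

lemma exists_Icc_image_eq {g : ℝ → ℝ} (hg : Continuous g) {r s p q : ℝ}
    (hrs : r ≤ s) (hpq : p ≤ q) (h : Set.Icc p q ⊆ g '' Set.Icc r s) :
    ∃ r' s', r ≤ r' ∧ r' ≤ s' ∧ s' ≤ s ∧ g '' Set.Icc r' s' = Set.Icc p q := by
  obtain ⟨u, hu, hgu⟩ := h (left_mem_Icc.2 hpq)
  obtain ⟨v, hv, hgv⟩ := h (right_mem_Icc.2 hpq)
  rcases le_total u v with huv | hvu
  · obtain ⟨r', s', h1, h2, h3, h4⟩ := core_Icc_image_eq hg huv hgu hgv hpq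
    exact ⟨r', s', le_trans hu.1 h1, h2, le_trans h3 hv.2, h4⟩
  · have h1 : (-u : ℝ) ≤ -v := neg_le_neg hvu
    obtain ⟨a, b, ha, hab, hb, him⟩ := core_Icc_image_eq (hg.comp continuous_neg) h1
      (by simpa using hgu) (by simpa using hgv) hpq
    refine ⟨-b, -a, ?_, by linarith, ?_, ?_⟩
    · linarith [hv.1]
    · linarith [hu.2]
    · have hneg : (fun a : ℝ => -a) '' Icc a b = Icc (-b) (-a) := by
        ext t
        constructor
        · rintro ⟨w, hw, rfl⟩
          simp only [Set.mem_Icc]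
          constructor <;> [linarith [hw.2]; linarith [hw.1]]
        · intro htt
          exact ⟨-t, ⟨by linarith [htt.2], by linarith [htt.1]⟩, neg_neg t⟩
      rw [← him, Set.image_comp, hneg]


open Set Uniformity UniformSpace Dynamics Filter ENNReal ENat

lemma itinerary {f : ℝ → ℝ} (hf : Continuous f) {d : ℕ} (p q : Fin d → ℝ)
    (hpq : ∀ i, p i ≤ q i)
    (hcov : ∀ i j, Set.Icc (p j) (q j) ⊆ f '' Set.Icc (p i) (q i))
    (w : ℕ → Fin d) (m : ℕ) :
    ∃ t, ∀ k ≤ m, f^[k] t ∈ Set.Icc (p (w k)) (q (w k)) := by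
  have main : ∀ m : ℕ, ∃ r s, r ≤ s ∧
      (∀ k ≤ m, ∀ t ∈ Icc r s, f^[k] t ∈ Icc (p (w k)) (q (w k))) ∧
      f^[m] '' Icc r s = Icc (p (w m)) (q (w m)) := by
    intro m
    induction m with
    | zero =>
      refine ⟨p (w 0), q (w 0), hpq _, ?_, by simp⟩
      intro k hk t ht
      interval_cases k
      simpa using ht
    | succ m ih =>
      obtain ⟨r, s, hrs, hin, him⟩ := ih
      have h1 : Icc (p (w (m+1))) (q (w (m+1))) ⊆ f^[m+1] '' Icc r s := by
        rw [Function.iterate_succ', Set.image_comp, him]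
        exact hcov _ _
      obtain ⟨r', s', h1', h2', h3', h4'⟩ :=
        exists_Icc_image_eq (hf.iterate (m+1)) hrs (hpq _) h1
      refine ⟨r', s', h2', ?_, h4'⟩
      intro k hk t ht
      rcases Nat.eq_or_lt_of_le hk with rfl | hk'
      · rw [← h4']
        exact Set.mem_image_of_mem _ ht
      · exact hin k (Nat.lt_succ_iff.mp hk') t
          ⟨le_trans h1' ht.1, le_trans ht.2 h3'⟩
  obtain ⟨r, s, hrs, hin, _⟩ := main m
  exact ⟨r, fun k hk => hin k hk r (left_mem_Icc.mpr hrs)⟩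

lemma log_le_coverEntropy {f : ℝ → ℝ} (hf : Continuous f) {d : ℕ} (hd : 1 ≤ d)
    (p q : Fin d → ℝ) (hpq : ∀ i, p i ≤ q i) {δ : ℝ} (hδ : 0 < δ)
    (hsep : ∀ i j, i ≠ j → ∀ u ∈ Set.Icc (p i) (q i), ∀ v ∈ Set.Icc (p j) (q j), δ ≤ |u - v|)
    (hcov : ∀ i j, Set.Icc (p j) (q j) ⊆ f '' Set.Icc (p i) (q i)) :
    (ENNReal.log d) ≤ Dynamics.coverEntropy f (closure (Set.range f)) := by
  set F := closure (Set.range f) with hF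
  set U : Set (ℝ × ℝ) := {y | dist y.1 y.2 < δ/2} with hUdef
  have hU : U ∈ uniformity ℝ := Metric.dist_mem_uniformity (by positivity)
  have i0 : Fin d := ⟨0, hd⟩
  have hcard : ∀ m : ℕ, ((d^m : ℕ) : ℕ∞) ≤ Dynamics.netMaxcard f F U m := by
    intro m
    have hit : ∀ w : Fin m → Fin d, ∃ y, y ∈ Set.range f ∧
        ∀ k : Fin m, f^[(k : ℕ)] y ∈ Set.Icc (p (w k)) (q (w k)) := by
      intro w
      set u : ℕ → Fin d := fun k => if h : k < m then w ⟨k, h⟩ else i0 with hu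
      obtain ⟨t, ht⟩ := itinerary hf p q hpq hcov (fun k => u (k - 1)) (m)
      refine ⟨f t, ⟨t, rfl⟩, fun k => ?_⟩
      have hk := ht ((k : ℕ) + 1) (by omega)
      rw [Function.iterate_succ_apply] at hk
      simpa [hu, Nat.add_sub_cancel, k.isLt] using hk
    choose Y hY1 hY2 using hit
    have hYinj : Function.Injective Y := by
      intro w w' hww
      by_contra hne
      obtain ⟨k, hk⟩ := Function.ne_iff.mp hne
      have h1 := hY2 w k
      rw [hww] at h1
      have := hsep _ _ hk _ h1 _ (hY2 w' k)
      simp at this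
      linarith
    set s : Finset ℝ := Finset.image Y Finset.univ with hs
    have hcard_s : s.card = d ^ m := by
      rw [hs, Finset.card_image_of_injective _ hYinj, Finset.card_univ, Fintype.card_fun]
      simp
    have hnet : Dynamics.IsDynNetIn f F U m (s : Set ℝ) := by
      constructor
      · intro y hy
        simp only [hs, Finset.coe_image, Finset.coe_univ, Set.image_univ, Set.mem_range] at hy
        obtain ⟨w, rfl⟩ := hy
        exact subset_closure (hY1 w)
      · intro a ha b hb hab
        simp only [hs, Finset.coe_image, Finset.coe_univ, Set.image_univ, Set.mem_range] at ha hb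
        obtain ⟨w, rfl⟩ := ha
        obtain ⟨w', rfl⟩ := hb
        have hne : w ≠ w' := fun h => hab (congrArg Y h)
        obtain ⟨k, hk⟩ := Function.ne_iff.mp hne
        simp only [Function.onFun]
        rw [Set.disjoint_left]
        intro z hz1 hz2
        rw [mem_ball_dynEntourage] at hz1 hz2
        have d1 := hz1 (k : ℕ) k.isLt
        have d2 := hz2 (k : ℕ) k.isLt
        rw [ball, Set.mem_preimage, hUdef] at d1 d2
        simp only [Set.mem_setOf_eq] at d1 d2
        have hdist : δ ≤ |f^[(k:ℕ)] (Y w) - f^[(k:ℕ)] (Y w')| :=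
          hsep _ _ hk _ (hY2 w k) _ (hY2 w' k)
        rw [Real.dist_eq] at d1 d2
        have := abs_sub_le (f^[(k:ℕ)] (Y w)) (f^[(k:ℕ)] z) (f^[(k:ℕ)] (Y w'))
        rw [abs_sub_comm (f^[(k:ℕ)] z)] at this
        linarith
    have := hnet.card_le_netMaxcard
    rwa [hcard_s] at this
  have hent : (ENNReal.log d) ≤ Dynamics.netEntropyEntourage f F U := by
    rw [Dynamics.netEntropyEntourage]
    apply le_limsup_of_frequently_le'
    refine Filter.Eventually.frequently (Filter.eventually_atTop.mpr ⟨1, fun m hm => ?_⟩)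
    have h1 : ((d : ℝ≥0∞))^m ≤ ((Dynamics.netMaxcard f F U m : ℕ∞) : ℝ≥0∞) := by
      have h2 := ENat.toENNReal_mono (hcard m)
      rwa [show (((d^m : ℕ) : ℕ∞) : ℝ≥0∞) = ((d : ℝ≥0∞))^m by push_cast; ring] at h2
    have h2 : (m : EReal) * ENNReal.log d ≤ ENNReal.log ((Dynamics.netMaxcard f F U m : ℕ∞) : ℝ≥0∞) := by
      rw [← ENNReal.log_pow]
      exact ENNReal.log_monotone h1
    have hm0 : ((m : ℕ) : EReal) ≠ 0 := by
      have h3 : ((m : ℕ) : EReal) = ((m : ℝ) : EReal) := by norm_cast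
      rw [h3, ne_eq, EReal.coe_eq_zero]
      have : (0:ℝ) < m := by exact_mod_cast hm
      exact this.ne'
    calc (ENNReal.log d) = ((m : EReal) * ENNReal.log d) / (m : EReal) := by
          rw [mul_comm, ← EReal.mul_div, EReal.div_self (EReal.natCast_ne_bot m)
            (EReal.natCast_ne_top m) hm0, mul_one]
      _ ≤ _ := EReal.monotone_div_right_of_nonneg (by exact_mod_cast Nat.cast_nonneg' (α := EReal) m) h2
  rw [Dynamics.coverEntropy_eq_iSup_netEntropyEntourage]
  exact le_trans hent (le_iSup₂ (f := fun (V : Set (ℝ × ℝ)) (_ : V ∈ 𝓤 ℝ) => Dynamics.netEntropyEntourage f F V) U hU)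


open Set Uniformity UniformSpace Dynamics Filter ENNReal ENat BoundedContinuousFunction

theorem aux_entropy_sup_infinite (B : Submodule ℝ (ℝ →ᵇ ℝ))
    (hB : ¬ Module.Finite ℝ B) :
    ∀ M : ℝ, ∃ f ∈ B, (M : EReal) <
      Dynamics.coverEntropy f (closure (Set.range f)) := by
  intro M
  -- choose d with exp M < d and 2 ≤ d
  obtain ⟨d₀, hd₀⟩ := exists_nat_gt (Real.exp M)
  set d : ℕ := max 2 d₀ with hd_def
  have hd2 : 2 ≤ d := le_max_left _ _
  have hd1 : 1 ≤ d := by omega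
  have hdM : Real.exp M < d := lt_of_lt_of_le hd₀ (by exact_mod_cast le_max_right 2 d₀)
  have hdpos : (0:ℝ) < d := lt_trans (Real.exp_pos M) hdM
  -- get 2*d points with surjective evaluation
  obtain ⟨x, hmono, hsurj⟩ := exists_eval_surj_mono B hB (2*d)
  set a : ℝ := x ⟨0, by omega⟩ with ha
  set b : ℝ := x ⟨2*d-1, by omega⟩ with hb
  set v : Fin (2*d) → ℝ := fun j => if Even (j : ℕ) then a else b with hv
  obtain ⟨f, hfB, hfv⟩ := hsurj v
  set p : Fin d → ℝ := fun i => x ⟨2*(i:ℕ), by omega⟩ with hp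
  set q : Fin d → ℝ := fun i => x ⟨2*(i:ℕ)+1, by omega⟩ with hq
  have hpq : ∀ i, p i ≤ q i := fun i => le_of_lt (hmono (by simp [Fin.mk_lt_mk]))
  have hfp : ∀ i, (f : ℝ →ᵇ ℝ) (p i) = a := by
    intro i
    have h := hfv ⟨2*(i:ℕ), by omega⟩
    simpa [hp, hv, Nat.even_mul] using h
  have hfq : ∀ i, (f : ℝ →ᵇ ℝ) (q i) = b := by
    intro i
    have h := hfv ⟨2*(i:ℕ)+1, by omega⟩
    simpa [hq, hv, Nat.even_add_one, Nat.even_mul] using h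
  have hcov : ∀ i j, Set.Icc (p j) (q j) ⊆ (f : ℝ → ℝ) '' Set.Icc (p i) (q i) := by
    intro i j
    have hsub : Set.Icc (p j) (q j) ⊆ Set.Icc a b := by
      apply Set.Icc_subset_Icc
      · exact hmono.monotone (by simp [Fin.mk_le_mk])
      · exact hmono.monotone (by simp [Fin.mk_le_mk]; omega)
    refine hsub.trans ?_
    have := intermediate_value_Icc (hpq i) (f.continuous.continuousOn
      (s := Set.Icc (p i) (q i)))
    rwa [hfp, hfq] at this
  -- separation
  set P : Finset (Fin d × Fin d) :=
    Finset.univ.filter (fun ij : Fin d × Fin d => ij.1 < ij.2) with hP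
  have hPne : P.Nonempty := by
    refine ⟨(⟨0, by omega⟩, ⟨1, by omega⟩), ?_⟩
    simp [hP, Fin.mk_lt_mk]
  set G : Finset ℝ := P.image (fun ij => p ij.2 - q ij.1) with hG
  have hGne : G.Nonempty := hPne.image _
  set δ : ℝ := G.min' hGne with hδdef
  have hgap : ∀ i j : Fin d, i < j → q i < p j := by
    intro i j hij
    apply hmono
    simp only [Fin.mk_lt_mk]
    have : (i:ℕ) < (j:ℕ) := hij
    omega
  have hδpos : 0 < δ := by
    obtain ⟨ij, hij, hmin⟩ := Finset.mem_image.mp (G.min'_mem hGne)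
    rw [hδdef, ← hmin]
    have := hgap ij.1 ij.2 (by simpa [hP] using hij)
    linarith
  have hδle : ∀ i j : Fin d, i < j → δ ≤ p j - q i := by
    intro i j hij
    apply Finset.min'_le
    exact Finset.mem_image.mpr ⟨(i, j), by simp [hP, hij], rfl⟩
  have hsep : ∀ i j, i ≠ j → ∀ u ∈ Set.Icc (p i) (q i), ∀ w ∈ Set.Icc (p j) (q j),
      δ ≤ |u - w| := by
    intro i j hij u hu w hw
    rcases lt_or_gt_of_ne hij with h | h
    · have := hδle i j h
      rw [abs_sub_comm]
      rw [abs_of_nonneg (by linarith [hu.2, hw.1])]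
      linarith [hu.2, hw.1]
    · have := hδle j i h
      rw [abs_of_nonneg (by linarith [hu.1, hw.2])]
      linarith [hu.1, hw.2]
  refine ⟨f, hfB, lt_of_lt_of_le ?_
    (log_le_coverEntropy f.continuous hd1 p q hpq hδpos hsep hcov)⟩
  -- M < log d
  have h1 : ((d:ℕ) : ℝ≥0∞) = ENNReal.ofReal (d : ℝ) := by
    rw [ENNReal.ofReal_natCast]
  rw [h1, ENNReal.log_ofReal_of_pos hdpos]
  exact EReal.coe_lt_coe_iff.mpr ((Real.lt_log_iff_exp_lt hdpos).mpr hdM)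


end aux

theorem infinite_dim_entropy_sup_infinite (B : Submodule ℝ (ℝ →ᵇ ℝ))
    (hB : ¬ Module.Finite ℝ B) :
    ∀ M : ℝ, ∃ f ∈ B, (M : EReal) < htop f := by
  intro M
  obtain ⟨f, hfB, hlt⟩ := aux_entropy_sup_infinite B hB M
  exact ⟨f, hfB, by rw [htop]; exact hlt⟩
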